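/- In the setting of the semidiscrete DG scheme on a partition 0 = x₀ < ⋯ < x_M = 1 with cellwise C² functions ρᵢ, vᵢ, τᵢ, qᵢ on [0,T] × [xᵢ, xᵢ₊₁], γ > 0, μ > 0, W ∈ C¹(ℝ), boundary conditions v₀(t,0) = v_{M−1}(t,1) = 0 and q₀(t,0) = q_{M−1}(t,1) = 0, define the symmetric interior penalty form B_h(u,w)(t) := Σᵢ ∫ ∂ₓuᵢ ∂ₓwᵢ dx − Σ_{j=0}^{M} ( {∂ₓw}ⱼ[u]ⱼ + {∂ₓu}ⱼ[w]ⱼ − (σ/h)[u]ⱼ[w]ⱼ ), where σ ≥ 0, h > 0, and at the boundary nodes [u]₀ := −u₀(t,0), {u}₀ := u₀(t,0), [u]_M := u_{M−1}(t,1), {u}_M := u_{M−1}(t,1). Assume for every t: equations (1), (3), (4) of the energy-consistent DG scheme hold as in the inviscid case, and (2') Σᵢ ∫ ( ρᵢ∂ₜvᵢ + ∂ₓ(ρᵢvᵢ²) − ∂ₓ(ρᵢvᵢ)vᵢ + ρᵢ∂ₓτᵢ − ½ρᵢ∂ₓ(vᵢ²) ) vᵢ dx + μ B_h(v,v)(t)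 = Σⱼ₌₁^{M−1} [τ]ⱼ {ρv}ⱼ. Then the discrete energy satisfies the dissipation equality d/dt Σᵢ ∫ [ W(ρᵢ) + ½ρᵢvᵢ² + (γ/2)qᵢ² ] dx = −μ B_h(v,v)(t) for all t ∈ [0,T]; in particular all energy change is due to the viscous form B_h. -/

import Mathlib

open Set MeasureTheory

/-- Time partial derivative of a function `f t x` of time and one space variable. -/
noncomputable def pt (f : ℝ → ℝ → ℝ) (t x : ℝ) : ℝ := deriv (fun s => f s x) t

/-- Space partial derivative of a function `f t x` of time and one space variable. -/
noncomputable def px (f : ℝ → ℝ → ℝ) (t x : ℝ) : ℝ := deriv (fun y => f t y) x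

/-- Jump of a cellwise function `g i : ℝ → ℝ` at node `j` of the partition
`xp 0 < ⋯ < xp M`, with the boundary conventions `[u]₀ = −u₀(x₀)` and
`[u]_M = u_{M−1}(x_M)`. -/
noncomputable def jmpN (M : ℕ) (xp : ℕ → ℝ) (g : ℕ → ℝ → ℝ) (j : ℕ) : ℝ :=
  if j = 0 then -g 0 (xp 0)
  else if j = M then g (M - 1) (xp M)
  else g (j - 1) (xp j) - g j (xp j)

/-- Average of a cellwise function `g i : ℝ → ℝ` at node `j` of the partition
`xp 0 < ⋯ < xp M`, with the boundary conventions `{u}₀ = u₀(x₀)` and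
`{u}_M = u_{M−1}(x_M)`. -/
noncomputable def avgN (M : ℕ) (xp : ℕ → ℝ) (g : ℕ → ℝ → ℝ) (j : ℕ) : ℝ :=
  if j = 0 then g 0 (xp 0)
  else if j = M then g (M - 1) (xp M)
  else (g (j - 1) (xp j) + g j (xp j)) / 2

/-- The symmetric interior penalty bilinear form `B_h(u,w)(t)` on the partition
`xp 0 < ⋯ < xp M`, with penalty parameter `σ/h`. -/
noncomputable def Bh (M : ℕ) (xp : ℕ → ℝ) (σ h : ℝ)
    (u w : ℕ → ℝ → ℝ → ℝ) (t : ℝ) : ℝ :=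
  (∑ i ∈ Finset.range M, ∫ y in xp i..xp (i + 1), px (u i) t y * px (w i) t y)
  - ∑ j ∈ Finset.range (M + 1),
      (avgN M xp (fun i => px (w i) t) j * jmpN M xp (fun i => u i t) j
        + avgN M xp (fun i => px (u i) t) j * jmpN M xp (fun i => w i t) j
        - (σ / h) * jmpN M xp (fun i => u i t) j * jmpN M xp (fun i => w i t) j)

/-! ### Auxiliary calculus lemmas -/

section C1
variable {F : ℝ → ℝ → ℝ} (hF : ContDiff ℝ 1 (fun z : ℝ × ℝ => F z.1 z.2)) (t y : ℝ)

include hF in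
lemma contF : Continuous (F t) :=
  hF.continuous.comp (continuous_const.prodMk continuous_id)

include hF in
lemma hasDerivAt_pt : HasDerivAt (fun s => F s y) (pt F t y) t := by
  have : DifferentiableAt ℝ (fun s => F s y) t :=
    ((hF.differentiable one_ne_zero) (t, y)).comp (g := fun z : ℝ × ℝ => F z.1 z.2) t
      ((differentiableAt_fun_id.prodMk (differentiableAt_const y)) :
        DifferentiableAt ℝ (fun s : ℝ => (s, y)) t)
  exact this.hasDerivAt

include hF in
lemma hasDerivAt_px : HasDerivAt (fun y' => F t y') (px F t y) y := by
  have : DifferentiableAt ℝ (fun y' => F t y') y :=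
    ((hF.differentiable one_ne_zero) (t, y)).comp y
      (((differentiableAt_const t).prodMk differentiableAt_fun_id) :
        DifferentiableAt ℝ (fun y' : ℝ => (t, y')) y)
  exact this.hasDerivAt

include hF in
lemma pt_rep : pt F t y = fderiv ℝ (fun z : ℝ × ℝ => F z.1 z.2) (t, y) (1, 0) := by
  have h1 : HasDerivAt (fun s : ℝ => (s, y)) ((1 : ℝ), (0 : ℝ)) t :=
    (hasDerivAt_id t).prodMk (hasDerivAt_const t y)
  have h2 := ((hF.differentiable one_ne_zero) (t, y)).hasFDerivAt.comp_hasDerivAt t h1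
  exact h2.deriv.symm ▸ rfl

include hF in
lemma px_rep : px F t y = fderiv ℝ (fun z : ℝ × ℝ => F z.1 z.2) (t, y) (0, 1) := by
  have h1 : HasDerivAt (fun y' : ℝ => (t, y')) ((0 : ℝ), (1 : ℝ)) y :=
    (hasDerivAt_const y t).prodMk (hasDerivAt_id y)
  have h2 := ((hF.differentiable one_ne_zero) (t, y)).hasFDerivAt.comp_hasDerivAt y h1
  exact h2.deriv.symm ▸ rfl

include hF in
lemma cont_pt : Continuous (fun y => pt F t y) := by
  have : (fun y => pt F t y)
      = fun y => fderiv ℝ (fun z : ℝ × ℝ => F z.1 z.2) (t, y) ((1 : ℝ), (0 : ℝ)) := by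
    funext y; exact pt_rep hF t y
  rw [this]
  exact ((hF.continuous_fderiv one_ne_zero).comp
    (continuous_const.prodMk continuous_id)).clm_apply continuous_const

include hF in
lemma cont_px : Continuous (fun y => px F t y) := by
  have : (fun y => px F t y)
      = fun y => fderiv ℝ (fun z : ℝ × ℝ => F z.1 z.2) (t, y) ((0 : ℝ), (1 : ℝ)) := by
    funext y; exact px_rep hF t y
  rw [this]
  exact ((hF.continuous_fderiv one_ne_zero).comp
    (continuous_const.prodMk continuous_id)).clm_apply continuous_const

end C1

section C2
variable {F : ℝ → ℝ → ℝ} (hF : ContDiff ℝ 2 (fun z : ℝ × ℝ => F z.1 z.2)) (t y : ℝ)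

include hF in
lemma fderiv_c1 : ContDiff ℝ 1 (fderiv ℝ (fun z : ℝ × ℝ => F z.1 z.2)) :=
  hF.fderiv_right (by norm_num)

include hF in
lemma hasDerivAt_fderiv_t (e : ℝ × ℝ) :
    HasDerivAt (fun s => fderiv ℝ (fun z : ℝ × ℝ => F z.1 z.2) (s, y) e)
      (((fderiv ℝ (fderiv ℝ (fun z : ℝ × ℝ => F z.1 z.2)) (t, y)) ((1 : ℝ), (0 : ℝ))) e) t := by
  have h1 : HasDerivAt (fun s : ℝ => (s, y)) ((1 : ℝ), (0 : ℝ)) t :=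
    (hasDerivAt_id t).prodMk (hasDerivAt_const t y)
  have h2 := (((fderiv_c1 hF).differentiable one_ne_zero) (t, y)).hasFDerivAt.comp_hasDerivAt t h1
  exact h2.clm_apply (hasDerivAt_const t e) |>.congr_deriv (by simp)

include hF in
lemma hasDerivAt_fderiv_x (e : ℝ × ℝ) :
    HasDerivAt (fun y' => fderiv ℝ (fun z : ℝ × ℝ => F z.1 z.2) (t, y') e)
      (((fderiv ℝ (fderiv ℝ (fun z : ℝ × ℝ => F z.1 z.2)) (t, y)) ((0 : ℝ), (1 : ℝ))) e) y := by
  have h1 : HasDerivAt (fun y' : ℝ => (t, y')) ((0 : ℝ), (1 : ℝ)) y :=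
    (hasDerivAt_const y t).prodMk (hasDerivAt_id y)
  have h2 := (((fderiv_c1 hF).differentiable one_ne_zero) (t, y)).hasFDerivAt.comp_hasDerivAt y h1
  exact h2.clm_apply (hasDerivAt_const y e) |>.congr_deriv (by simp)

include hF in
lemma pt_px_rep : pt (px F) t y
    = ((fderiv ℝ (fderiv ℝ (fun z : ℝ × ℝ => F z.1 z.2)) (t, y)) ((1 : ℝ), (0 : ℝ))) ((0:ℝ), (1:ℝ)) := by
  have h0 : (fun s => px F s y)
      = fun s => fderiv ℝ (fun z : ℝ × ℝ => F z.1 z.2) (s, y) ((0 : ℝ), (1 : ℝ)) := by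
    funext s; exact px_rep (hF.of_le one_le_two) s y
  have h := hasDerivAt_fderiv_t hF t y ((0:ℝ), (1:ℝ))
  rw [pt, h0]
  exact h.deriv

include hF in
lemma hasDerivAt_pt_x : HasDerivAt (fun y' => pt F t y') (pt (px F) t y) y := by
  have hrep : (fun y' => pt F t y')
      = fun y' => fderiv ℝ (fun z : ℝ × ℝ => F z.1 z.2) (t, y') ((1 : ℝ), (0 : ℝ)) := by
    funext y'; exact pt_rep (hF.of_le one_le_two) t y'
  rw [hrep]
  have h := hasDerivAt_fderiv_x hF t y ((1:ℝ), (0:ℝ))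
  have hsym : ((fderiv ℝ (fderiv ℝ (fun z : ℝ × ℝ => F z.1 z.2)) (t, y)) ((0 : ℝ), (1 : ℝ))) ((1:ℝ), (0:ℝ))
      = ((fderiv ℝ (fderiv ℝ (fun z : ℝ × ℝ => F z.1 z.2)) (t, y)) ((1 : ℝ), (0 : ℝ))) ((0:ℝ), (1:ℝ)) := by
    apply second_derivative_symmetric
      (f := fun z : ℝ × ℝ => F z.1 z.2) (f' := fderiv ℝ (fun z : ℝ × ℝ => F z.1 z.2))
    · intro z; exact ((hF.differentiable two_ne_zero) z).hasFDerivAt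
    · exact (((fderiv_c1 hF).differentiable one_ne_zero) (t, y)).hasFDerivAt
  rw [pt_px_rep hF t y]
  exact hsym ▸ h

include hF in
lemma cont_pt_px : Continuous (fun y' => pt (px F) t y') := by
  have h0 : (fun y' => pt (px F) t y')
      = fun y' => ((fderiv ℝ (fderiv ℝ (fun z : ℝ × ℝ => F z.1 z.2)) (t, y')) ((1 : ℝ), (0 : ℝ))) ((0:ℝ), (1:ℝ)) := by
    funext y'; exact pt_px_rep hF t y'
  rw [h0]
  have hc : Continuous (fderiv ℝ (fderiv ℝ (fun z : ℝ × ℝ => F z.1 z.2))) :=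
    (fderiv_c1 hF).continuous_fderiv one_ne_zero
  exact (((hc.comp (continuous_const.prodMk continuous_id)).clm_apply
    continuous_const).clm_apply continuous_const)

end C2

lemma hasDerivAt_intervalIntegral {F : ℝ → ℝ → ℝ}
    (hF : ContDiff ℝ 1 (fun z : ℝ × ℝ => F z.1 z.2)) (a b t : ℝ) :
    HasDerivAt (fun s => ∫ y in a..b, F s y) (∫ y in a..b, pt F t y) t := by
  obtain ⟨C, hC⟩ : ∃ C, ∀ z ∈ (Icc (t - 1) (t + 1) ×ˢ uIcc a b : Set (ℝ × ℝ)),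
      ‖fderiv ℝ (fun z : ℝ × ℝ => F z.1 z.2) z ((1 : ℝ), (0 : ℝ))‖ ≤ C := by
    apply (isCompact_Icc.prod isCompact_uIcc).exists_bound_of_continuousOn
    exact ((hF.continuous_fderiv one_ne_zero).clm_apply continuous_const).continuousOn
  have key := intervalIntegral.hasDerivAt_integral_of_dominated_loc_of_deriv_le
    (μ := volume) (F := F) (F' := pt F) (x₀ := t) (a := a) (b := b)
    (bound := fun _ => C) (s := Metric.ball t 1) (Metric.ball_mem_nhds t one_pos)
    (Filter.Eventually.of_forall fun x => ((contF (hF.of_le le_rfl) x).aestronglyMeasurable))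
    ((contF hF t).intervalIntegrable a b)
    ((cont_pt hF t).aestronglyMeasurable)
    ?_ (intervalIntegrable_const) ?_
  · exact key.2
  · refine Filter.Eventually.of_forall fun y hy => fun x hxball => ?_
    rw [pt_rep hF x y]
    apply hC
    constructor
    · have := Metric.mem_ball.mp hxball
      rw [Real.dist_eq] at this
      constructor <;> [linarith [abs_lt.mp this]; linarith [abs_lt.mp this]]
    · exact Set.uIoc_subset_uIcc hy
  · exact Filter.Eventually.of_forall fun y _ => fun x _ => hasDerivAt_pt hF x y

lemma telescope_sum {M : ℕ} (hM : 1 ≤ M) (a b : ℕ → ℝ) :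
    ∑ i ∈ Finset.range M, (b i - a i)
      = (∑ j ∈ Finset.Ico 1 M, (b (j - 1) - a j)) + b (M - 1) - a 0 := by
  induction M with
  | zero => omega
  | succ n ih =>
    rcases Nat.lt_or_ge 1 (n + 1) with h | h
    · have hn : 1 ≤ n := by omega
      rw [Finset.sum_range_succ, ih hn, Finset.sum_Ico_succ_top (by omega : 1 ≤ n)]
      simp only [Nat.add_sub_cancel]
      ring
    · have : n = 0 := by omega
      subst this; simp

/-- Energy dissipation for the spatially semidiscrete DG scheme for the NSK
system (`μ > 0`) with symmetric interior penalty viscous form `B_h`: under the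
energy-consistent DG equations (1), (3), (4) and the momentum equation (2')
including `μ B_h(v,v)`, the discrete energy satisfies
`d/dt Σᵢ ∫ (W(ρᵢ) + ½ρᵢvᵢ² + (γ/2)qᵢ²) = −μ B_h(v,v)(t)` on `[0,T]`: all
energy change is due to the viscous form. -/
theorem dg_semidiscrete_energy_dissipation_viscous
    (M : ℕ) (hM : 1 ≤ M) (xp : ℕ → ℝ)
    (hx0 : xp 0 = 0) (hxM : xp M = 1)
    (hx : ∀ i < M, xp i < xp (i + 1))
    (T γ μ σ h : ℝ) (hT : 0 < T) (hγ : 0 < γ) (hμ : 0 < μ)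
    (hσ : 0 ≤ σ) (hh : 0 < h)
    (W : ℝ → ℝ) (hW : ContDiff ℝ 1 W)
    (ρ v τ q : ℕ → ℝ → ℝ → ℝ)  -- cell index, time, position
    (hρ : ∀ i < M, ContDiff ℝ 2 (fun z : ℝ × ℝ => ρ i z.1 z.2))
    (hv : ∀ i < M, ContDiff ℝ 2 (fun z : ℝ × ℝ => v i z.1 z.2))
    (hτ : ∀ i < M, ContDiff ℝ 2 (fun z : ℝ × ℝ => τ i z.1 z.2))
    (hq : ∀ i < M, ContDiff ℝ 2 (fun z : ℝ × ℝ => q i z.1 z.2))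
    -- boundary conditions
    (hbv : ∀ t ∈ Icc (0:ℝ) T, v 0 t 0 = 0 ∧ v (M - 1) t 1 = 0)
    (hbq : ∀ t ∈ Icc (0:ℝ) T, q 0 t 0 = 0 ∧ q (M - 1) t 1 = 0)
    -- (1) mass equation tested with τ
    (h1 : ∀ t ∈ Icc (0:ℝ) T,
      ∑ i ∈ Finset.range M, ∫ y in xp i..xp (i + 1),
          ((pt (ρ i) t y + px (fun s z => ρ i s z * v i s z) t y) * τ i t y)
        = ∑ j ∈ Finset.Ico 1 M,
            (ρ (j - 1) t (xp j) * v (j - 1) t (xp j)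
              - ρ j t (xp j) * v j t (xp j))
            * ((τ (j - 1) t (xp j) + τ j t (xp j)) / 2))
    -- (2') momentum equation with interior penalty viscosity, tested with v
    (h2 : ∀ t ∈ Icc (0:ℝ) T,
      (∑ i ∈ Finset.range M, ∫ y in xp i..xp (i + 1),
          ((ρ i t y * pt (v i) t y
              + px (fun s z => ρ i s z * (v i s z) ^ 2) t y
              - px (fun s z => ρ i s z * v i s z) t y * v i t y
              + ρ i t y * px (τ i) t y
              - (1/2) * ρ i t y * px (fun s z => (v i s z) ^ 2) t y)
            * v i t y))
        + μ * Bh M xp σ h v v t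
        = ∑ j ∈ Finset.Ico 1 M,
            (τ (j - 1) t (xp j) - τ j t (xp j))
            * ((ρ (j - 1) t (xp j) * v (j - 1) t (xp j)
                + ρ j t (xp j) * v j t (xp j)) / 2))
    -- (3) chemical-potential equation tested with ∂ₜρ
    (h3 : ∀ t ∈ Icc (0:ℝ) T,
      ∑ i ∈ Finset.range M, ∫ y in xp i..xp (i + 1),
          ((τ i t y - deriv W (ρ i t y) + γ * px (q i) t y
              - (1/2) * (v i t y) ^ 2) * pt (ρ i) t y)
        = γ * ∑ j ∈ Finset.Ico 1 M,
            (q (j - 1) t (xp j) - q j t (xp j))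
            * ((pt (ρ (j - 1)) t (xp j) + pt (ρ j) t (xp j)) / 2))
    -- (4) time-differentiated gradient equation tested with q
    (h4 : ∀ t ∈ Icc (0:ℝ) T,
      ∑ i ∈ Finset.range M, ∫ y in xp i..xp (i + 1),
          ((pt (q i) t y - pt (px (ρ i)) t y) * q i t y)
        = -∑ j ∈ Finset.Ico 1 M,
            (pt (ρ (j - 1)) t (xp j) - pt (ρ j) t (xp j))
            * ((q (j - 1) t (xp j) + q j t (xp j)) / 2)) :
    ∀ t ∈ Icc (0:ℝ) T,
      HasDerivWithinAt
        (fun s => ∑ i ∈ Finset.range M, ∫ y in xp i..xp (i + 1),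
          (W (ρ i s y) + (1/2) * ρ i s y * (v i s y) ^ 2
            + (γ/2) * (q i s y) ^ 2))
        (-(μ * Bh M xp σ h v v t))
        (Icc (0:ℝ) T) t := by
  intro t ht
  -- C¹ versions of the regularity hypotheses
  have hρ1 : ∀ i, i < M → ContDiff ℝ 1 (fun z : ℝ × ℝ => ρ i z.1 z.2) :=
    fun i hi => (hρ i hi).of_le one_le_two
  have hv1 : ∀ i, i < M → ContDiff ℝ 1 (fun z : ℝ × ℝ => v i z.1 z.2) :=
    fun i hi => (hv i hi).of_le one_le_two
  have hτ1 : ∀ i, i < M → ContDiff ℝ 1 (fun z : ℝ × ℝ => τ i z.1 z.2) :=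
    fun i hi => (hτ i hi).of_le one_le_two
  have hq1 : ∀ i, i < M → ContDiff ℝ 1 (fun z : ℝ × ℝ => q i z.1 z.2) :=
    fun i hi => (hq i hi).of_le one_le_two
  -- Step A: differentiate each cell integral under the integral sign
  have stepA : ∀ i ∈ Finset.range M,
      HasDerivAt (fun s => ∫ y in xp i..xp (i + 1),
          (W (ρ i s y) + (1/2) * ρ i s y * (v i s y) ^ 2 + (γ/2) * (q i s y) ^ 2))
        (∫ y in xp i..xp (i + 1),
          (deriv W (ρ i t y) * pt (ρ i) t y
            + (1/2) * pt (ρ i) t y * (v i t y) ^ 2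
            + ρ i t y * v i t y * pt (v i) t y
            + γ * (q i t y * pt (q i) t y))) t := by
    intro i hi0
    have hi := Finset.mem_range.mp hi0
    have hρi := hρ1 i hi; have hvi := hv1 i hi; have hqi := hq1 i hi
    have hE : ContDiff ℝ 1 (fun z : ℝ × ℝ =>
        W (ρ i z.1 z.2) + (1/2) * ρ i z.1 z.2 * (v i z.1 z.2) ^ 2
          + (γ/2) * (q i z.1 z.2) ^ 2) :=
      ((hW.comp hρi).add ((contDiff_const.mul hρi).mul (hvi.pow 2))).add
        (contDiff_const.mul (hqi.pow 2))
    have h0 := hasDerivAt_intervalIntegral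
      (F := fun s y => W (ρ i s y) + (1/2) * ρ i s y * (v i s y) ^ 2
        + (γ/2) * (q i s y) ^ 2) hE (xp i) (xp (i + 1)) t
    have hcong : (∫ y in xp i..xp (i + 1),
        pt (fun s y => W (ρ i s y) + (1/2) * ρ i s y * (v i s y) ^ 2
          + (γ/2) * (q i s y) ^ 2) t y)
        = ∫ y in xp i..xp (i + 1),
          (deriv W (ρ i t y) * pt (ρ i) t y
            + (1/2) * pt (ρ i) t y * (v i t y) ^ 2
            + ρ i t y * v i t y * pt (v i) t y
            + γ * (q i t y * pt (q i) t y)) := by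
      apply intervalIntegral.integral_congr
      intro y _
      have hρt := hasDerivAt_pt (F := ρ i) hρi t y
      have hvt := hasDerivAt_pt (F := v i) hvi t y
      have hqt := hasDerivAt_pt (F := q i) hqi t y
      have hWd : HasDerivAt W (deriv W (ρ i t y)) (ρ i t y) :=
        ((hW.differentiable one_ne_zero) (ρ i t y)).hasDerivAt
      have htot : HasDerivAt (fun s =>
          W (ρ i s y) + (1/2) * ρ i s y * (v i s y) ^ 2 + (γ/2) * (q i s y) ^ 2)
          (deriv W (ρ i t y) * pt (ρ i) t y
            + (1/2) * pt (ρ i) t y * (v i t y) ^ 2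
            + ρ i t y * v i t y * pt (v i) t y
            + γ * (q i t y * pt (q i) t y)) t := by
        have ha : HasDerivAt (fun s => W (ρ i s y))
            (deriv W (ρ i t y) * pt (ρ i) t y) t := hWd.comp t hρt
        have hb := (hρt.const_mul (1/2 : ℝ)).mul (hvt.pow 2)
        have hc := (hqt.pow 2).const_mul (γ/2 : ℝ)
        exact ((ha.add hb).add hc).congr_deriv (by simp only [Pi.pow_apply]; push_cast; ring)
      exact htot.deriv
    rwa [hcong] at h0
  have stepB := HasDerivAt.fun_sum stepA
  -- Step C: identify the derivative with -(μ B_h)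
  have stepC : (∑ i ∈ Finset.range M, ∫ y in xp i..xp (i + 1),
        (deriv W (ρ i t y) * pt (ρ i) t y
          + (1/2) * pt (ρ i) t y * (v i t y) ^ 2
          + ρ i t y * v i t y * pt (v i) t y
          + γ * (q i t y * pt (q i) t y)))
      = -(μ * Bh M xp σ h v v t) := by
    -- continuity facts
    have cρ : ∀ i, i < M → Continuous (fun y => ρ i t y) := fun i hi => contF (hρ1 i hi) t
    have cv : ∀ i, i < M → Continuous (fun y => v i t y) := fun i hi => contF (hv1 i hi) t
    have cτ : ∀ i, i < M → Continuous (fun y => τ i t y) := fun i hi => contF (hτ1 i hi) t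
    have cq : ∀ i, i < M → Continuous (fun y => q i t y) := fun i hi => contF (hq1 i hi) t
    have cptρ : ∀ i, i < M → Continuous (fun y => pt (ρ i) t y) := fun i hi => cont_pt (hρ1 i hi) t
    have cptv : ∀ i, i < M → Continuous (fun y => pt (v i) t y) := fun i hi => cont_pt (hv1 i hi) t
    have cptq : ∀ i, i < M → Continuous (fun y => pt (q i) t y) := fun i hi => cont_pt (hq1 i hi) t
    have cpxτ : ∀ i, i < M → Continuous (fun y => px (τ i) t y) := fun i hi => cont_px (hτ1 i hi) t
    have cpxq : ∀ i, i < M → Continuous (fun y => px (q i) t y) := fun i hi => cont_px (hq1 i hi) t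
    have cW' : ∀ i, i < M → Continuous (fun y => deriv W (ρ i t y)) :=
      fun i hi => (hW.continuous_deriv le_rfl).comp (cρ i hi)
    have cpxrv : ∀ i, i < M → Continuous (fun y => px (fun s z => ρ i s z * v i s z) t y) :=
      fun i hi => cont_px (F := fun s z => ρ i s z * v i s z)
        (((hρ i hi).mul (hv i hi)).of_le one_le_two) t
    have cptpxρ : ∀ i, i < M → Continuous (fun y => pt (px (ρ i)) t y) :=
      fun i hi => cont_pt_px (hρ i hi) t
    -- E0 : split the energy-derivative integrand
    have E0 : (∑ i ∈ Finset.range M, ∫ y in xp i..xp (i + 1),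
          (deriv W (ρ i t y) * pt (ρ i) t y
            + (1/2) * pt (ρ i) t y * (v i t y) ^ 2
            + ρ i t y * v i t y * pt (v i) t y
            + γ * (q i t y * pt (q i) t y)))
        = (∑ i ∈ Finset.range M, ∫ y in xp i..xp (i + 1), deriv W (ρ i t y) * pt (ρ i) t y)
          + (∑ i ∈ Finset.range M, ∫ y in xp i..xp (i + 1), (1/2) * pt (ρ i) t y * (v i t y) ^ 2)
          + (∑ i ∈ Finset.range M, ∫ y in xp i..xp (i + 1), ρ i t y * v i t y * pt (v i) t y)
          + γ * (∑ i ∈ Finset.range M, ∫ y in xp i..xp (i + 1), q i t y * pt (q i) t y) := by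
      rw [Finset.mul_sum, ← Finset.sum_add_distrib, ← Finset.sum_add_distrib,
        ← Finset.sum_add_distrib]
      refine Finset.sum_congr rfl fun i hi0 => ?_
      have hi := Finset.mem_range.mp hi0
      have i1 : IntervalIntegrable (fun y => deriv W (ρ i t y) * pt (ρ i) t y)
          volume (xp i) (xp (i+1)) := ((cW' i hi).mul (cptρ i hi)).intervalIntegrable _ _
      have i2 : IntervalIntegrable (fun y => (1/2) * pt (ρ i) t y * (v i t y) ^ 2)
          volume (xp i) (xp (i+1)) :=
        ((continuous_const.mul (cptρ i hi)).mul ((cv i hi).pow 2)).intervalIntegrable _ _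
      have i3 : IntervalIntegrable (fun y => ρ i t y * v i t y * pt (v i) t y)
          volume (xp i) (xp (i+1)) :=
        (((cρ i hi).mul (cv i hi)).mul (cptv i hi)).intervalIntegrable _ _
      have i4 : IntervalIntegrable (fun y => γ * (q i t y * pt (q i) t y))
          volume (xp i) (xp (i+1)) :=
        (continuous_const.mul ((cq i hi).mul (cptq i hi))).intervalIntegrable _ _
      rw [← intervalIntegral.integral_const_mul, ← intervalIntegral.integral_add i1 i2,
        ← intervalIntegral.integral_add (i1.add i2) i3,
        ← intervalIntegral.integral_add ((i1.add i2).add i3) i4]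
    -- E1 : mass equation split
    have E1 : (∑ i ∈ Finset.range M, ∫ y in xp i..xp (i + 1), pt (ρ i) t y * τ i t y)
        + (∑ i ∈ Finset.range M, ∫ y in xp i..xp (i + 1),
            px (fun s z => ρ i s z * v i s z) t y * τ i t y)
        = ∑ j ∈ Finset.Ico 1 M,
            (ρ (j - 1) t (xp j) * v (j - 1) t (xp j) - ρ j t (xp j) * v j t (xp j))
            * ((τ (j - 1) t (xp j) + τ j t (xp j)) / 2) := by
      rw [← h1 t ht, ← Finset.sum_add_distrib]
      refine Finset.sum_congr rfl fun i hi0 => ?_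
      have hi := Finset.mem_range.mp hi0
      have i1 : IntervalIntegrable (fun y => pt (ρ i) t y * τ i t y)
          volume (xp i) (xp (i+1)) := ((cptρ i hi).mul (cτ i hi)).intervalIntegrable _ _
      have i2 : IntervalIntegrable (fun y => px (fun s z => ρ i s z * v i s z) t y * τ i t y)
          volume (xp i) (xp (i+1)) := ((cpxrv i hi).mul (cτ i hi)).intervalIntegrable _ _
      rw [← intervalIntegral.integral_add i1 i2]
      exact intervalIntegral.integral_congr fun y _ => by ring
    -- E3 : chemical potential equation split
    have E3 : (∑ i ∈ Finset.range M, ∫ y in xp i..xp (i + 1), pt (ρ i) t y * τ i t y)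
        - (∑ i ∈ Finset.range M, ∫ y in xp i..xp (i + 1), deriv W (ρ i t y) * pt (ρ i) t y)
        + γ * (∑ i ∈ Finset.range M, ∫ y in xp i..xp (i + 1), px (q i) t y * pt (ρ i) t y)
        - (∑ i ∈ Finset.range M, ∫ y in xp i..xp (i + 1), (1/2) * pt (ρ i) t y * (v i t y) ^ 2)
        = γ * ∑ j ∈ Finset.Ico 1 M,
            (q (j - 1) t (xp j) - q j t (xp j))
            * ((pt (ρ (j - 1)) t (xp j) + pt (ρ j) t (xp j)) / 2) := by
      rw [← h3 t ht, Finset.mul_sum, ← Finset.sum_sub_distrib, ← Finset.sum_add_distrib,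
        ← Finset.sum_sub_distrib]
      refine Finset.sum_congr rfl fun i hi0 => ?_
      have hi := Finset.mem_range.mp hi0
      have i1 : IntervalIntegrable (fun y => pt (ρ i) t y * τ i t y)
          volume (xp i) (xp (i+1)) := ((cptρ i hi).mul (cτ i hi)).intervalIntegrable _ _
      have i2 : IntervalIntegrable (fun y => deriv W (ρ i t y) * pt (ρ i) t y)
          volume (xp i) (xp (i+1)) := ((cW' i hi).mul (cptρ i hi)).intervalIntegrable _ _
      have i3 : IntervalIntegrable (fun y => γ * (px (q i) t y * pt (ρ i) t y))
          volume (xp i) (xp (i+1)) :=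
        (continuous_const.mul ((cpxq i hi).mul (cptρ i hi))).intervalIntegrable _ _
      have i4 : IntervalIntegrable (fun y => (1/2) * pt (ρ i) t y * (v i t y) ^ 2)
          volume (xp i) (xp (i+1)) :=
        ((continuous_const.mul (cptρ i hi)).mul ((cv i hi).pow 2)).intervalIntegrable _ _
      rw [← intervalIntegral.integral_const_mul, ← intervalIntegral.integral_sub i1 i2,
        ← intervalIntegral.integral_add (i1.sub i2) i3,
        ← intervalIntegral.integral_sub ((i1.sub i2).add i3) i4]
      exact intervalIntegral.integral_congr fun y _ => by ring
    -- E4 : gradient equation split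
    have E4 : (∑ i ∈ Finset.range M, ∫ y in xp i..xp (i + 1), q i t y * pt (q i) t y)
        - (∑ i ∈ Finset.range M, ∫ y in xp i..xp (i + 1), pt (px (ρ i)) t y * q i t y)
        = -∑ j ∈ Finset.Ico 1 M,
            (pt (ρ (j - 1)) t (xp j) - pt (ρ j) t (xp j))
            * ((q (j - 1) t (xp j) + q j t (xp j)) / 2) := by
      rw [← h4 t ht, ← Finset.sum_sub_distrib]
      refine Finset.sum_congr rfl fun i hi0 => ?_
      have hi := Finset.mem_range.mp hi0
      have i1 : IntervalIntegrable (fun y => q i t y * pt (q i) t y)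
          volume (xp i) (xp (i+1)) := ((cq i hi).mul (cptq i hi)).intervalIntegrable _ _
      have i2 : IntervalIntegrable (fun y => pt (px (ρ i)) t y * q i t y)
          volume (xp i) (xp (i+1)) := ((cptpxρ i hi).mul (cq i hi)).intervalIntegrable _ _
      rw [← intervalIntegral.integral_sub i1 i2]
      exact intervalIntegral.integral_congr fun y _ => by ring
    -- E2 : momentum equation, with pointwise cancellation of the transport terms
    have E2core : (∑ i ∈ Finset.range M, ∫ y in xp i..xp (i + 1),
          ((ρ i t y * pt (v i) t y
              + px (fun s z => ρ i s z * (v i s z) ^ 2) t y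
              - px (fun s z => ρ i s z * v i s z) t y * v i t y
              + ρ i t y * px (τ i) t y
              - (1/2) * ρ i t y * px (fun s z => (v i s z) ^ 2) t y)
            * v i t y))
        = (∑ i ∈ Finset.range M, ∫ y in xp i..xp (i + 1), ρ i t y * v i t y * pt (v i) t y)
          + (∑ i ∈ Finset.range M, ∫ y in xp i..xp (i + 1), ρ i t y * v i t y * px (τ i) t y) := by
      rw [← Finset.sum_add_distrib]
      refine Finset.sum_congr rfl fun i hi0 => ?_
      have hi := Finset.mem_range.mp hi0
      have hρi := hρ1 i hi; have hvi := hv1 i hi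
      have i1 : IntervalIntegrable (fun y => ρ i t y * v i t y * pt (v i) t y)
          volume (xp i) (xp (i+1)) :=
        (((cρ i hi).mul (cv i hi)).mul (cptv i hi)).intervalIntegrable _ _
      have i2 : IntervalIntegrable (fun y => ρ i t y * v i t y * px (τ i) t y)
          volume (xp i) (xp (i+1)) :=
        (((cρ i hi).mul (cv i hi)).mul (cpxτ i hi)).intervalIntegrable _ _
      rw [← intervalIntegral.integral_add i1 i2]
      refine intervalIntegral.integral_congr fun y _ => ?_
      have e1 : px (fun s z => ρ i s z * v i s z) t y
          = px (ρ i) t y * v i t y + ρ i t y * px (v i) t y :=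
        ((hasDerivAt_px (F := ρ i) hρi t y).mul (hasDerivAt_px (F := v i) hvi t y)).deriv
      have e2 : px (fun s z => ρ i s z * (v i s z) ^ 2) t y
          = px (ρ i) t y * (v i t y) ^ 2 + ρ i t y * (2 * v i t y * px (v i) t y) :=
        (((hasDerivAt_px (F := ρ i) hρi t y).mul
          ((hasDerivAt_px (F := v i) hvi t y).pow 2)).congr_deriv (by norm_num)).deriv
      have e3 : px (fun s z => (v i s z) ^ 2) t y = 2 * v i t y * px (v i) t y :=
        (((hasDerivAt_px (F := v i) hvi t y).pow 2).congr_deriv (by norm_num)).deriv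
      rw [e1, e2, e3]
      ring
    have E2 : (∑ i ∈ Finset.range M, ∫ y in xp i..xp (i + 1), ρ i t y * v i t y * pt (v i) t y)
        + (∑ i ∈ Finset.range M, ∫ y in xp i..xp (i + 1), ρ i t y * v i t y * px (τ i) t y)
        + μ * Bh M xp σ h v v t
        = ∑ j ∈ Finset.Ico 1 M,
            (τ (j - 1) t (xp j) - τ j t (xp j))
            * ((ρ (j - 1) t (xp j) * v (j - 1) t (xp j)
                + ρ j t (xp j) * v j t (xp j)) / 2) := by
      rw [← E2core]; exact h2 t ht
    -- IBP1 : integration by parts for ρvτ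
    have IBP1 : (∑ i ∈ Finset.range M, ∫ y in xp i..xp (i + 1),
          px (fun s z => ρ i s z * v i s z) t y * τ i t y)
        + (∑ i ∈ Finset.range M, ∫ y in xp i..xp (i + 1), ρ i t y * v i t y * px (τ i) t y)
        = (∑ j ∈ Finset.Ico 1 M,
            (ρ (j - 1) t (xp j) * v (j - 1) t (xp j) - ρ j t (xp j) * v j t (xp j))
            * ((τ (j - 1) t (xp j) + τ j t (xp j)) / 2))
          + (∑ j ∈ Finset.Ico 1 M,
            (τ (j - 1) t (xp j) - τ j t (xp j))
            * ((ρ (j - 1) t (xp j) * v (j - 1) t (xp j)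
                + ρ j t (xp j) * v j t (xp j)) / 2)) := by
      rw [← Finset.sum_add_distrib]
      have key : ∀ i ∈ Finset.range M,
          ((∫ y in xp i..xp (i + 1), px (fun s z => ρ i s z * v i s z) t y * τ i t y)
            + ∫ y in xp i..xp (i + 1), ρ i t y * v i t y * px (τ i) t y)
          = (fun k => ρ k t (xp (k+1)) * v k t (xp (k+1)) * τ k t (xp (k+1))) i
            - (fun k => ρ k t (xp k) * v k t (xp k) * τ k t (xp k)) i := by
        intro i hi0
        have hi := Finset.mem_range.mp hi0
        have hrv1 : ContDiff ℝ 1 (fun z : ℝ × ℝ =>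
            (fun s zz => ρ i s zz * v i s zz) z.1 z.2) :=
          ((hρ i hi).mul (hv i hi)).of_le one_le_two
        have hder : ∀ y ∈ uIcc (xp i) (xp (i+1)),
            HasDerivAt (fun y' => ρ i t y' * v i t y' * τ i t y')
              (px (fun s z => ρ i s z * v i s z) t y * τ i t y
                + ρ i t y * v i t y * px (τ i) t y) y :=
          fun y _ => (hasDerivAt_px (F := fun s z => ρ i s z * v i s z) hrv1 t y).mul
            (hasDerivAt_px (F := τ i) (hτ1 i hi) t y)
        have hint : IntervalIntegrable (fun y =>
            px (fun s z => ρ i s z * v i s z) t y * τ i t y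
              + ρ i t y * v i t y * px (τ i) t y) volume (xp i) (xp (i+1)) :=
          (((cpxrv i hi).mul (cτ i hi)).add
            (((cρ i hi).mul (cv i hi)).mul (cpxτ i hi))).intervalIntegrable _ _
        rw [← intervalIntegral.integral_add (f := fun y => px (fun s z => ρ i s z * v i s z) t y * τ i t y)
          (g := fun y => ρ i t y * v i t y * px (τ i) t y) (((cpxrv i hi).mul (cτ i hi)).intervalIntegrable _ _)
          ((((cρ i hi).mul (cv i hi)).mul (cpxτ i hi)).intervalIntegrable _ _)]
        exact intervalIntegral.integral_eq_sub_of_hasDerivAt hder hint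
      rw [Finset.sum_congr rfl key, telescope_sum hM]
      have hbM : ρ (M-1) t (xp (M-1+1)) * v (M-1) t (xp (M-1+1)) * τ (M-1) t (xp (M-1+1)) = 0 := by
        have hM1 : M - 1 + 1 = M := by omega
        simp only [hM1, hxM, (hbv t ht).2, mul_zero, zero_mul]
      have hb0 : ρ 0 t (xp 0) * v 0 t (xp 0) * τ 0 t (xp 0) = 0 := by
        simp only [hx0, (hbv t ht).1, mul_zero, zero_mul]
      rw [hbM, hb0, add_zero, sub_zero, ← Finset.sum_add_distrib]
      refine Finset.sum_congr rfl fun j hj => ?_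
      have hjj : j - 1 + 1 = j := by
        have := (Finset.mem_Ico.mp hj).1; omega
      simp only [hjj]
      ring
    -- IBP2 : integration by parts for (∂ₜρ) q
    have IBP2 : (∑ i ∈ Finset.range M, ∫ y in xp i..xp (i + 1), px (q i) t y * pt (ρ i) t y)
        + (∑ i ∈ Finset.range M, ∫ y in xp i..xp (i + 1), pt (px (ρ i)) t y * q i t y)
        = (∑ j ∈ Finset.Ico 1 M,
            (pt (ρ (j - 1)) t (xp j) - pt (ρ j) t (xp j))
            * ((q (j - 1) t (xp j) + q j t (xp j)) / 2))
          + (∑ j ∈ Finset.Ico 1 M,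
            (q (j - 1) t (xp j) - q j t (xp j))
            * ((pt (ρ (j - 1)) t (xp j) + pt (ρ j) t (xp j)) / 2)) := by
      rw [← Finset.sum_add_distrib]
      have key : ∀ i ∈ Finset.range M,
          ((∫ y in xp i..xp (i + 1), px (q i) t y * pt (ρ i) t y)
            + ∫ y in xp i..xp (i + 1), pt (px (ρ i)) t y * q i t y)
          = (fun k => pt (ρ k) t (xp (k+1)) * q k t (xp (k+1))) i
            - (fun k => pt (ρ k) t (xp k) * q k t (xp k)) i := by
        intro i hi0
        have hi := Finset.mem_range.mp hi0
        have hder : ∀ y ∈ uIcc (xp i) (xp (i+1)),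
            HasDerivAt (fun y' => pt (ρ i) t y' * q i t y')
              (pt (px (ρ i)) t y * q i t y + pt (ρ i) t y * px (q i) t y) y :=
          fun y _ => (hasDerivAt_pt_x (F := ρ i) (hρ i hi) t y).mul
            (hasDerivAt_px (F := q i) (hq1 i hi) t y)
        have hint : IntervalIntegrable (fun y =>
            pt (px (ρ i)) t y * q i t y + pt (ρ i) t y * px (q i) t y)
            volume (xp i) (xp (i+1)) :=
          (((cptpxρ i hi).mul (cq i hi)).add
            ((cptρ i hi).mul (cpxq i hi))).intervalIntegrable _ _
        calc ((∫ y in xp i..xp (i + 1), px (q i) t y * pt (ρ i) t y)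
              + ∫ y in xp i..xp (i + 1), pt (px (ρ i)) t y * q i t y)
            = ∫ y in xp i..xp (i + 1),
                (pt (px (ρ i)) t y * q i t y + pt (ρ i) t y * px (q i) t y) := by
              rw [← intervalIntegral.integral_add (f := fun y => px (q i) t y * pt (ρ i) t y)
                (g := fun y => pt (px (ρ i)) t y * q i t y)
                (((cpxq i hi).mul (cptρ i hi)).intervalIntegrable _ _)
                (((cptpxρ i hi).mul (cq i hi)).intervalIntegrable _ _)]
              exact intervalIntegral.integral_congr fun y _ => by ring
          _ = _ := intervalIntegral.integral_eq_sub_of_hasDerivAt hder hint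
      rw [Finset.sum_congr rfl key, telescope_sum hM]
      have hbM : pt (ρ (M-1)) t (xp (M-1+1)) * q (M-1) t (xp (M-1+1)) = 0 := by
        have hM1 : M - 1 + 1 = M := by omega
        simp only [hM1, hxM, (hbq t ht).2, mul_zero]
      have hb0 : pt (ρ 0) t (xp 0) * q 0 t (xp 0) = 0 := by
        simp only [hx0, (hbq t ht).1, mul_zero]
      rw [hbM, hb0, add_zero, sub_zero, ← Finset.sum_add_distrib]
      refine Finset.sum_congr rfl fun j hj => ?_
      have hjj : j - 1 + 1 = j := by
        have := (Finset.mem_Ico.mp hj).1; omega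
      simp only [hjj]
      ring
    linear_combination E0 - E3 + γ * E4 + E2 + E1 - IBP1 + γ * IBP2

  rw [stepC] at stepB
  exact stepB.hasDerivWithinAt
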